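/- Let μ ∈ (−1, 0) and γ = α + μ with α, γ ∈ (0,1). Then for all t ∈ [0,1] and h ∈ (0, 1−t], one has t^γ (t+h)^μ ((t+h)^{−μ} − t^{−μ}) ≤ C h^γ for a constant C depending only on μ, γ. -/

import Mathlib

open Set

/-- For `μ ∈ (-1,0)` and `γ = α + μ` with `α, γ ∈ (0,1)`: for all `t ∈ [0,1]` and
`h ∈ (0, 1-t]`, `t^γ (t+h)^μ ((t+h)^{-μ} - t^{-μ}) ≤ C h^γ` for a constant `C`
depending only on `μ, γ`. -/
theorem power_increment_bound (μ α γ : ℝ) (hμ1 : -1 < μ) (hμ2 : μ < 0)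
    (hα : α ∈ Ioo (0:ℝ) 1) (hγ : γ ∈ Ioo (0:ℝ) 1) (hsum : γ = α + μ) :
    ∃ C > (0:ℝ), ∀ t ∈ Icc (0:ℝ) 1, ∀ h : ℝ, 0 < h → h ≤ 1 - t →
      t ^ γ * (t + h) ^ μ * ((t + h) ^ (-μ) - t ^ (-μ)) ≤ C * h ^ γ := by
  refine ⟨1 - μ, by linarith, ?_⟩
  intro t ht h hh hth
  obtain ⟨ht0, ht1⟩ := ht
  rcases eq_or_lt_of_le ht0 with rfl | htpos
  · rw [Real.zero_rpow (ne_of_gt hγ.1), zero_mul, zero_mul]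
    exact mul_nonneg (by linarith) (Real.rpow_nonneg hh.le γ)
  · have hthpos : 0 < t + h := by linarith
    -- rewrite the middle factor
    have hE : (t + h) ^ μ * ((t + h) ^ (-μ) - t ^ (-μ))
        = 1 - (t + h) ^ μ * t ^ (-μ) := by
      rw [mul_sub, ← Real.rpow_add hthpos]
      simp
    have hr0 : 0 ≤ (t + h) ^ μ * t ^ (-μ) := by positivity
    -- key estimate: 1 - (t+h)^μ t^(-μ) ≤ -μ * h / t
    have hkey : 1 - (t + h) ^ μ * t ^ (-μ) ≤ -μ * (h / t) := by
      set s : ℝ := h / t with hs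
      have hspos : 0 < s := div_pos hh htpos
      have hx : (t + h) / t = 1 + s := by
        field_simp [hs]
        rw [hs]
        field_simp
      have hA1 : 1 ≤ (1 + s) ^ (-μ) :=
        Real.one_le_rpow (by linarith) (by linarith)
      have hA2 : (1 + s) ^ (-μ) ≤ 1 + (-μ) * s :=
        rpow_one_add_le_one_add_mul_self (by linarith) (by linarith) (by linarith)
      have hAne : (1 + s) ^ (-μ) ≠ 0 := by positivity
      have hr : (t + h) ^ μ * t ^ (-μ) = ((1 + s) ^ (-μ))⁻¹ := by
        rw [← hx, ← Real.rpow_neg (by positivity), Real.div_rpow (by linarith) htpos.le,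
          Real.rpow_neg htpos.le μ, neg_neg]
        field_simp
      rw [hr]
      have hinv : ((1 + s) ^ (-μ))⁻¹ * ((1 + s) ^ (-μ)) = 1 := inv_mul_cancel₀ hAne
      have hApos : 0 < (1 + s) ^ (-μ) := by positivity
      nlinarith [hA1, hA2, hinv, hApos]
    rcases le_total h t with hht | hht
    · -- small increment: use the derivative bound
      have h1 : t ^ γ * (t + h) ^ μ * ((t + h) ^ (-μ) - t ^ (-μ))
          ≤ t ^ γ * (-μ * (h / t)) := by
        rw [mul_assoc, hE]
        exact mul_le_mul_of_nonneg_left hkey (by positivity)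
      have h2 : t ^ γ * (-μ * (h / t)) = -μ * (t ^ (γ - 1) * h) := by
        rw [Real.rpow_sub_one (ne_of_gt htpos)]
        field_simp
      have h3 : t ^ (γ - 1) ≤ h ^ (γ - 1) :=
        Real.rpow_le_rpow_of_nonpos hh hht (by linarith [hγ.2])
      have h4 : h ^ (γ - 1) * h = h ^ γ := by
        rw [Real.rpow_sub_one (ne_of_gt hh)]
        field_simp
      calc t ^ γ * (t + h) ^ μ * ((t + h) ^ (-μ) - t ^ (-μ))
          ≤ -μ * (t ^ (γ - 1) * h) := by rw [← h2]; exact h1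
        _ ≤ -μ * (h ^ (γ - 1) * h) := by
            apply mul_le_mul_of_nonneg_left _ (by linarith)
            exact mul_le_mul_of_nonneg_right h3 hh.le
        _ = -μ * h ^ γ := by rw [h4]
        _ ≤ (1 - μ) * h ^ γ := by
            apply mul_le_mul_of_nonneg_right (by linarith) (by positivity)
    · -- large increment: use the trivial bound
      have h1 : t ^ γ * (t + h) ^ μ * ((t + h) ^ (-μ) - t ^ (-μ)) ≤ t ^ γ * 1 := by
        rw [mul_assoc, hE]
        exact mul_le_mul_of_nonneg_left (by linarith) (by positivity)
      have h2 : t ^ γ ≤ h ^ γ := Real.rpow_le_rpow ht0 hht hγ.1.le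
      have h3 : h ^ γ ≤ (1 - μ) * h ^ γ := by
        nlinarith [Real.rpow_nonneg hh.le γ]
      linarith [h1, h2, h3]
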